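/- For a finite weighted digraph (G,m), the multiplicity of the eigenvalue 0 of the in Laplacian L^+ equals the number of sources of G, and the multiplicity of the eigenvalue 0 of the out Laplacian L^- equals the number of sinks of G. In particular, 0 is a simple eigenvalue of L^{+/ -} if and only if G has exactly one source/sink. -/

import Mathlib

open Finset Polynomial

variable {V A : Type*}

/-- Reachability by a directed path (`u ⇝ v`). -/
def Reaches (tail head : A → V) : V → V → Prop :=
  Relation.ReflTransGen (fun u v => ∃ a, tail a = u ∧ head a = v)

/-- A source: the vertex set of an SCC with no arcs entering it from its complement. -/
def IsSourceF (tail head : A → V) (F : Finset V) : Prop :=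
  F.Nonempty ∧ (∀ u ∈ F, ∀ v ∈ F, Reaches tail head u v) ∧
    (∀ u ∈ F, ∀ v, Reaches tail head u v → Reaches tail head v u → v ∈ F) ∧
    (∀ a, head a ∈ F → tail a ∈ F)

/-- A sink: the vertex set of an SCC with no arcs leaving it into its complement. -/
def IsSinkF (tail head : A → V) (S : Finset V) : Prop :=
  S.Nonempty ∧ (∀ u ∈ S, ∀ v ∈ S, Reaches tail head u v) ∧
    (∀ u ∈ S, ∀ v, Reaches tail head u v → Reaches tail head v u → v ∈ S) ∧
    (∀ a, tail a ∈ S → head a ∈ S)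

/-- The in Laplacian `L⁺ = (d⁺)* d` in its explicit form. -/
noncomputable def Lplus [Fintype A] [DecidableEq V] (tail head : A → V)
    (mV : V → ℝ) (mA : A → ℝ) (φ : V → ℂ) (v : V) : ℂ :=
  (mV v : ℂ)⁻¹ * ∑ a ∈ univ.filter (fun a => head a = v), (φ v - φ (tail a)) * (mA a : ℂ)

/-- The out Laplacian `L⁻ = (d⁻)* d` in its explicit form. -/
noncomputable def Lminus [Fintype A] [DecidableEq V] (tail head : A → V)
    (mV : V → ℝ) (mA : A → ℝ) (φ : V → ℂ) (v : V) : ℂ :=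
  (mV v : ℂ)⁻¹ * ∑ a ∈ univ.filter (fun a => tail a = v), (φ v - φ (head a)) * (mA a : ℂ)

/-- Matrix of `L⁺` in the coordinate basis. -/
noncomputable def Mplus [Fintype A] [DecidableEq V] (tail head : A → V)
    (mV : V → ℝ) (mA : A → ℝ) : Matrix V V ℂ :=
  fun v w => Lplus tail head mV mA (fun u => if u = w then 1 else 0) v

/-- Matrix of `L⁻` in the coordinate basis. -/
noncomputable def Mminus [Fintype A] [DecidableEq V] (tail head : A → V)
    (mV : V → ℝ) (mA : A → ℝ) : Matrix V V ℂ :=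
  fun v w => Lminus tail head mV mA (fun u => if u = w then 1 else 0) v

set_option linter.unusedSectionVars false

section Aux

open Matrix Relation

variable [Fintype V] [Fintype A] [DecidableEq V]
variable (tail head : A → V) (mV : V → ℝ) (mA : A → ℝ)

lemma reaches_swap {u v : V} : Reaches head tail u v ↔ Reaches tail head v u := by
  unfold Reaches
  rw [← Relation.reflTransGen_swap]
  constructor
  · exact fun h => Relation.ReflTransGen.mono (fun x y ⟨a, h1, h2⟩ => ⟨a, h2, h1⟩) _ _ h
  · exact fun h => Relation.ReflTransGen.mono (fun x y ⟨a, h1, h2⟩ => ⟨a, h2, h1⟩) _ _ h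

lemma sink_iff_source (S : Finset V) :
    IsSinkF tail head S ↔ IsSourceF head tail S := by
  unfold IsSinkF IsSourceF
  simp only [reaches_swap]
  constructor
  · rintro ⟨h1, h2, h3, h4⟩
    exact ⟨h1, fun u hu v hv => h2 v hv u hu, fun u hu v hvu huv => h3 u hu v huv hvu, h4⟩
  · rintro ⟨h1, h2, h3, h4⟩
    exact ⟨h1, fun u hu v hv => h2 v hv u hu, fun u hu v huv hvu => h3 u hu v hvu huv, h4⟩

lemma mulVec_Mplus (φ : V → ℂ) (v : V) :
    (Mplus tail head mV mA).mulVec φ v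
      = (mV v : ℂ)⁻¹ * ∑ a ∈ univ.filter (fun a => head a = v),
          (φ v - φ (tail a)) * (mA a : ℂ) := by
  simp only [Matrix.mulVec, dotProduct, Mplus, Lplus]
  have hstep : ∀ w : V, ((mV v : ℂ)⁻¹ * ∑ a ∈ univ.filter (fun a => head a = v),
        ((if v = w then (1:ℂ) else 0) - (if tail a = w then (1:ℂ) else 0)) * (mA a : ℂ)) * φ w
      = (mV v : ℂ)⁻¹ * ∑ a ∈ univ.filter (fun a => head a = v),
        ((if v = w then (1:ℂ) else 0) - (if tail a = w then (1:ℂ) else 0)) * (mA a : ℂ) * φ w := by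
    intro w
    rw [mul_assoc, Finset.sum_mul]
  simp only [hstep]
  rw [← Finset.mul_sum, Finset.sum_comm]
  congr 1
  refine Finset.sum_congr rfl fun a _ => ?_
  simp only [sub_mul, ite_mul, one_mul, zero_mul, Finset.sum_sub_distrib,
    Finset.sum_ite_eq, Finset.mem_univ, if_true]
  ring

lemma reaches_refl (v : V) : Reaches tail head v v := Relation.ReflTransGen.refl

lemma reach_prop (U : Set V) (hU : ∀ a, head a ∈ U → tail a ∈ U)
    {u v : V} (h : Reaches tail head u v) (hv : v ∈ U) : u ∈ U := by
  induction h with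
  | refl => exact hv
  | tail h₁ h₂ ih =>
      obtain ⟨a, ha1, ha2⟩ := h₂
      apply ih
      rw [← ha1]
      apply hU
      rw [ha2]
      exact hv

lemma exists_source_reaching (v : V) :
    ∃ F : Finset V, IsSourceF tail head F ∧ ∃ u ∈ F, Reaches tail head u v := by
  classical
  set Rs : V → Finset V := fun w => univ.filter (fun x => Reaches tail head x w) with hRs
  obtain ⟨u₀, hu₀v, hmin⟩ := (Rs v).exists_min_image (fun w => (Rs w).card)
    ⟨v, by simp only [Rs, Finset.mem_filter, Finset.mem_univ, true_and]; exact reaches_refl tail head v⟩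
  simp only [Rs, Finset.mem_filter, Finset.mem_univ, true_and] at hu₀v
  have key : ∀ w, Reaches tail head w u₀ → Reaches tail head u₀ w := by
    intro w hw
    have hsub : Rs w ⊆ Rs u₀ := by
      intro x hx
      simp only [Rs, Finset.mem_filter, Finset.mem_univ, true_and] at hx ⊢
      exact hx.trans hw
    have hwv : w ∈ Rs v := by
      simp only [Rs, Finset.mem_filter, Finset.mem_univ, true_and]
      exact hw.trans hu₀v
    have hcard := hmin w hwv
    have heq : Rs w = Rs u₀ := Finset.eq_of_subset_of_card_le hsub hcard
    have hmem : u₀ ∈ Rs w := by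
      rw [heq]
      simp only [Rs, Finset.mem_filter, Finset.mem_univ, true_and]
      exact reaches_refl tail head u₀
    simpa only [Rs, Finset.mem_filter, Finset.mem_univ, true_and] using hmem
  refine ⟨univ.filter (fun w => Reaches tail head w u₀ ∧ Reaches tail head u₀ w),
    ⟨⟨u₀, by simp only [Finset.mem_filter, Finset.mem_univ, true_and]; exact ⟨reaches_refl tail head u₀, reaches_refl tail head u₀⟩⟩, ?_, ?_, ?_⟩,
    u₀, by simp only [Finset.mem_filter, Finset.mem_univ, true_and]; exact ⟨reaches_refl tail head u₀, reaches_refl tail head u₀⟩, hu₀v⟩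
  · intro x hx y hy
    simp only [Finset.mem_filter, Finset.mem_univ, true_and] at hx hy
    exact hx.1.trans hy.2
  · intro x hx y hxy hyx
    simp only [Finset.mem_filter, Finset.mem_univ, true_and] at hx ⊢
    exact ⟨hyx.trans hx.1, hx.2.trans hxy⟩
  · intro a ha
    simp only [Finset.mem_filter, Finset.mem_univ, true_and] at ha ⊢
    have hstep : Reaches tail head (tail a) (head a) :=
      Relation.ReflTransGen.single ⟨a, rfl, rfl⟩
    have h1 : Reaches tail head (tail a) u₀ := hstep.trans ha.1
    exact ⟨h1, key _ h1⟩

lemma harmR_const_on_source (hmA : ∀ a, 0 < mA a)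
    (F : Finset V) (hF : IsSourceF tail head F) (r : V → ℝ)
    (hr : ∀ v ∈ F, ∑ a ∈ univ.filter (fun a => head a = v), (r v - r (tail a)) * mA a = 0)
    {u w : V} (hu : u ∈ F) (hw : w ∈ F) : r u = r w := by
  obtain ⟨vm, hvm, hmax⟩ := F.exists_max_image r hF.1
  suffices h : ∀ x ∈ F, r x = r vm by rw [h u hu, h w hw]
  intro x hx
  set U : Set V := {y | y ∈ F ∧ r y = r vm} with hUdef
  have hU : ∀ a, head a ∈ U → tail a ∈ U := by
    rintro a ⟨haF, hamax⟩
    have htF : tail a ∈ F := hF.2.2.2 a haF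
    have hsum := hr (head a) haF
    have hterm : ∀ b ∈ univ.filter (fun b => head b = head a),
        0 ≤ (r (head a) - r (tail b)) * mA b := by
      intro b hb
      simp only [Finset.mem_filter, Finset.mem_univ, true_and] at hb
      have htbF : tail b ∈ F := hF.2.2.2 b (hb ▸ haF)
      have h1 : r (tail b) ≤ r (head a) := by
        rw [hamax]
        exact hmax _ htbF
      exact mul_nonneg (by linarith) (hmA b).le
    have hzero := (Finset.sum_eq_zero_iff_of_nonneg hterm).mp hsum a (by simp)
    have hzz : r (head a) - r (tail a) = 0 := by
      rcases mul_eq_zero.mp hzero with h | h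
      · exact h
      · exact absurd h (hmA a).ne'
    exact ⟨htF, by rw [show r (tail a) = r (head a) by linarith, hamax]⟩
  have hreach : Reaches tail head x vm := hF.2.1 x hx vm hvm
  exact (reach_prop tail head U hU hreach ⟨hvm, rfl⟩).2

lemma harmR_le_zero (hmA : ∀ a, 0 < mA a)
    (r : V → ℝ)
    (hr : ∀ v, ∑ a ∈ univ.filter (fun a => head a = v), (r v - r (tail a)) * mA a = 0)
    (h0 : ∀ F : Finset V, IsSourceF tail head F → ∀ v ∈ F, r v = 0)
    (v : V) : r v ≤ 0 := by
  obtain ⟨vm, _, hmax⟩ := (univ : Finset V).exists_max_image r ⟨v, mem_univ v⟩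
  set U : Set V := {y | r y = r vm} with hUdef
  have hU : ∀ a, head a ∈ U → tail a ∈ U := by
    intro a ha
    have hsum := hr (head a)
    have hterm : ∀ b ∈ univ.filter (fun b => head b = head a),
        0 ≤ (r (head a) - r (tail b)) * mA b := by
      intro b hb
      have h1 : r (tail b) ≤ r (head a) := by
        rw [show r (head a) = r vm from ha]
        exact hmax _ (mem_univ _)
      exact mul_nonneg (by linarith) (hmA b).le
    have hzero := (Finset.sum_eq_zero_iff_of_nonneg hterm).mp hsum a (by simp)
    have hzz : r (head a) - r (tail a) = 0 := by
      rcases mul_eq_zero.mp hzero with h | h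
      · exact h
      · exact absurd h (hmA a).ne'
    show r (tail a) = r vm
    rw [show r (tail a) = r (head a) by linarith]
    exact ha
  obtain ⟨F, hF, u, huF, hureach⟩ := exists_source_reaching tail head vm
  have huU : u ∈ U := reach_prop tail head U hU hureach rfl
  have hvm0 : r vm = 0 := by
    rw [← show r u = r vm from huU]
    exact h0 F hF u huF
  calc r v ≤ r vm := hmax v (mem_univ v)
    _ = 0 := hvm0

lemma harmR_eq_zero (hmA : ∀ a, 0 < mA a)
    (r : V → ℝ)
    (hr : ∀ v, ∑ a ∈ univ.filter (fun a => head a = v), (r v - r (tail a)) * mA a = 0)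
    (h0 : ∀ F : Finset V, IsSourceF tail head F → ∀ v ∈ F, r v = 0)
    (v : V) : r v = 0 := by
  have h1 : r v ≤ 0 := harmR_le_zero tail head mA hmA r hr h0 v
  have hr' : ∀ v, ∑ a ∈ univ.filter (fun a => head a = v),
      ((-r) v - (-r) (tail a)) * mA a = 0 := by
    intro w
    have : ∑ a ∈ univ.filter (fun a => head a = w), ((-r) w - (-r) (tail a)) * mA a
        = - ∑ a ∈ univ.filter (fun a => head a = w), (r w - r (tail a)) * mA a := by
      rw [← Finset.sum_neg_distrib]
      exact Finset.sum_congr rfl fun a _ => by simp; ring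
    rw [this, hr w, neg_zero]
  have h2 : (-r) v ≤ 0 := harmR_le_zero tail head mA hmA (-r) hr'
    (fun F hF w hw => by simp [h0 F hF w hw]) v
  simp only [Pi.neg_apply, neg_nonpos] at h2
  linarith

lemma harm_comp (L : ℂ →ₗ[ℝ] ℝ) (φ : V → ℂ) (v : V)
    (h : ∑ a ∈ univ.filter (fun a => head a = v), (φ v - φ (tail a)) * (mA a : ℂ) = 0) :
    ∑ a ∈ univ.filter (fun a => head a = v),
      ((fun w => L (φ w)) v - (fun w => L (φ w)) (tail a)) * mA a = 0 := by
  have hL := congrArg L h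
  rw [map_sum, map_zero] at hL
  rw [← hL]
  refine Finset.sum_congr rfl fun a _ => ?_
  have h1 : (φ v - φ (tail a)) * (mA a : ℂ) = (mA a : ℝ) • (φ v - φ (tail a)) := by
    rw [Complex.real_smul]; ring
  rw [h1, _root_.map_smul, map_sub]
  simp only [smul_eq_mul]
  ring

lemma harmonic_of_mem_ker (hmV : ∀ v, 0 < mV v) (φ : V → ℂ)
    (hφ : (Mplus tail head mV mA).mulVec φ = 0) (v : V) :
    ∑ a ∈ univ.filter (fun a => head a = v), (φ v - φ (tail a)) * (mA a : ℂ) = 0 := by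
  have h := congrFun hφ v
  rw [mulVec_Mplus] at h
  have hne : ((mV v : ℂ))⁻¹ ≠ 0 := by
    apply inv_ne_zero
    exact_mod_cast (hmV v).ne'
  rcases mul_eq_zero.mp h with h' | h'
  · exact absurd h' hne
  · exact h'

lemma ker_const_on_source (hmV : ∀ v, 0 < mV v) (hmA : ∀ a, 0 < mA a)
    (F : Finset V) (hF : IsSourceF tail head F) (φ : V → ℂ)
    (hφ : (Mplus tail head mV mA).mulVec φ = 0)
    {u w : V} (hu : u ∈ F) (hw : w ∈ F) : φ u = φ w := by
  have harm := harmonic_of_mem_ker tail head mV mA hmV φ hφ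
  apply Complex.ext
  · exact harmR_const_on_source tail head mA hmA F hF (fun x => (φ x).re)
      (fun v _ => harm_comp tail head mA Complex.reLm φ v (harm v)) hu hw
  · exact harmR_const_on_source tail head mA hmA F hF (fun x => (φ x).im)
      (fun v _ => harm_comp tail head mA Complex.imLm φ v (harm v)) hu hw

lemma ker_eq_zero_of_vanish (hmV : ∀ v, 0 < mV v) (hmA : ∀ a, 0 < mA a)
    (φ : V → ℂ) (hφ : (Mplus tail head mV mA).mulVec φ = 0)
    (h0 : ∀ F : Finset V, IsSourceF tail head F → ∀ v ∈ F, φ v = 0) : φ = 0 := by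
  have harm := harmonic_of_mem_ker tail head mV mA hmV φ hφ
  funext v
  show φ v = 0
  have hre : (φ v).re = 0 := harmR_eq_zero tail head mA hmA (fun x => (φ x).re)
    (fun w => harm_comp tail head mA Complex.reLm φ w (harm w))
    (fun F hF w hw => by show (φ w).re = 0; rw [h0 F hF w hw]; simp) v
  have him : (φ v).im = 0 := harmR_eq_zero tail head mA hmA (fun x => (φ x).im)
    (fun w => harm_comp tail head mA Complex.imLm φ w (harm w))
    (fun F hF w hw => by show (φ w).im = 0; rw [h0 F hF w hw]; simp) v
  exact Complex.ext (by simpa using hre) (by simpa using him)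

lemma source_eq_of_mem {F F' : Finset V} (hF : IsSourceF tail head F)
    (hF' : IsSourceF tail head F') {v : V} (hv : v ∈ F) (hv' : v ∈ F') : F = F' := by
  ext w
  constructor
  · intro hw
    exact hF'.2.2.1 v hv' w (hF.2.1 v hv w hw) (hF.2.1 w hw v hv)
  · intro hw
    exact hF.2.2.1 v hv w (hF'.2.1 v hv' w hw) (hF'.2.1 w hw v hv')

lemma exists_left_vec (hmV : ∀ v, 0 < mV v) (hmA : ∀ a, 0 < mA a)
    (F : Finset V) (hF : IsSourceF tail head F) :
    ∃ π : V → ℂ, (∀ v, v ∉ F → π v = 0) ∧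
      Matrix.vecMul π (Mplus tail head mV mA) = 0 ∧ (∑ v ∈ F, π v) ≠ 0 := by
  classical
  set M := Mplus tail head mV mA with hMdef
  -- no φ has (Mφ)|F ≡ 1
  have hone : ∀ φ : V → ℂ, ¬ (∀ v ∈ F, M.mulVec φ v = 1) := by
    intro φ hφ
    obtain ⟨vm, hvm, hmin⟩ := F.exists_min_image (fun w => (φ w).re) hF.1
    have h1 := hφ vm hvm
    rw [hMdef, mulVec_Mplus] at h1
    have hne : (mV vm : ℂ) ≠ 0 := by exact_mod_cast (hmV vm).ne'
    have hSm : ∑ a ∈ univ.filter (fun a => head a = vm), (φ vm - φ (tail a)) * (mA a : ℂ)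
        = (mV vm : ℂ) := by
      have h2 := congrArg (fun z => (mV vm : ℂ) * z) h1
      simp only [← mul_assoc, mul_inv_cancel₀ hne, one_mul, mul_one] at h2
      exact h2
    have hre := congrArg Complex.re hSm
    rw [Complex.re_sum] at hre
    have hle : ∑ a ∈ univ.filter (fun a => head a = vm),
        ((φ vm - φ (tail a)) * (mA a : ℂ)).re ≤ 0 := by
      apply Finset.sum_nonpos
      intro a ha
      simp only [Finset.mem_filter, Finset.mem_univ, true_and] at ha
      have htF : tail a ∈ F := hF.2.2.2 a (ha ▸ hvm)
      have h3 : (φ vm).re ≤ (φ (tail a)).re := hmin _ htF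
      have h4 : ((φ vm - φ (tail a)) * (mA a : ℂ)).re
          = ((φ vm).re - (φ (tail a)).re) * mA a := by
        simp [Complex.mul_re, Complex.sub_re, Complex.sub_im]
      rw [h4]
      exact mul_nonpos_of_nonpos_of_nonneg (by linarith) (hmA a).le
    rw [hre] at hle
    simp only [Complex.ofReal_re] at hle
    exact absurd hle (not_le.mpr (hmV vm))
  -- linear algebra: separate 1 from the range of φ ↦ (Mφ)|F
  set Aop : (V → ℂ) →ₗ[ℂ] ({ x // x ∈ F } → ℂ) :=
    (LinearMap.funLeft ℂ ℂ (fun i : { x // x ∈ F } => (i : V))).comp M.mulVecLin with hAop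
  have h1mem : (fun _ => 1 : { x // x ∈ F } → ℂ) ∉ LinearMap.range Aop := by
    rintro ⟨φ, hφ⟩
    apply hone φ
    intro v hv
    have := congrFun hφ ⟨v, hv⟩
    simpa [hAop, LinearMap.funLeft, Matrix.mulVecLin_apply] using this
  obtain ⟨f, hf1, hfbot⟩ :=
    Submodule.exists_dual_map_eq_bot_of_notMem h1mem inferInstance
  have hker : ∀ φ : V → ℂ, f (Aop φ) = 0 := by
    intro φ
    have hmem : f (Aop φ) ∈ (LinearMap.range Aop).map f :=
      Submodule.mem_map_of_mem ⟨φ, rfl⟩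
    rwa [hfbot, Submodule.mem_bot] at hmem
  set π : V → ℂ := fun v => if h : v ∈ F then
      f (fun j => if (⟨v, h⟩ : { x // x ∈ F }) = j then 1 else 0) else 0 with hπ
  have hsupp : ∀ v, v ∉ F → π v = 0 := fun v hv => by simp [hπ, dif_neg hv]
  have hsum : ∑ v ∈ F, π v = f (fun _ => 1) := by
    rw [LinearMap.pi_apply_eq_sum_univ f (fun _ => 1), Finset.univ_eq_attach,
      ← Finset.sum_attach F π]
    refine Finset.sum_congr rfl fun x _ => ?_
    simp only [hπ, dif_pos x.2, Subtype.coe_eta, one_smul]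
  have hvm : Matrix.vecMul π M = 0 := by
    funext w
    have h0 := hker (Pi.single w 1)
    have hAw : Aop (Pi.single w 1) = fun i : { x // x ∈ F } => M i w := by
      funext i
      simp [hAop, LinearMap.funLeft, Matrix.mulVecLin_apply]
    rw [hAw, LinearMap.pi_apply_eq_sum_univ f] at h0
    have heq : Matrix.vecMul π M w
        = ∑ i : { x // x ∈ F }, M (i : V) w • f (fun j => if i = j then 1 else 0) := by
      show Finset.sum univ (fun v => π v * M v w) = _
      rw [← Finset.sum_subset (Finset.subset_univ F)
        (fun v _ hv => by rw [hsupp v hv, zero_mul])]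
      rw [Finset.univ_eq_attach, ← Finset.sum_attach F (fun v => π v * M v w)]
      refine Finset.sum_congr rfl fun x _ => ?_
      simp only [hπ, dif_pos x.2, Subtype.coe_eta, smul_eq_mul]
      ring
    rw [heq, h0]
    rfl
  exact ⟨π, hsupp, hvm, by rw [hsum]; exact hf1⟩

lemma mult_eq_card_sources (hmV : ∀ v, 0 < mV v) (hmA : ∀ a, 0 < mA a) :
    (Mplus tail head mV mA).charpoly.rootMultiplicity 0
      = {F : Finset V | IsSourceF tail head F}.ncard := by
  classical
  set M := Mplus tail head mV mA with hMdef
  set f : Module.End ℂ (V → ℂ) := M.mulVecLin with hfdef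
  have happly : ∀ φ : V → ℂ, f φ = M.mulVec φ := fun φ => rfl
  -- semisimplicity at 0
  have hker2 : ∀ φ : V → ℂ, f (f φ) = 0 → f φ = 0 := by
    intro φ h2
    set ψ : V → ℂ := M.mulVec φ with hψdef
    have hψker : M.mulVec ψ = 0 := h2
    have hvanish : ∀ F : Finset V, IsSourceF tail head F → ∀ v ∈ F, ψ v = 0 := by
      intro F hF v hv
      obtain ⟨π, hπsupp, hπvm, hπsum⟩ := exists_left_vec tail head mV mA hmV hmA F hF
      have hdot : dotProduct π ψ = 0 := by
        rw [hψdef, Matrix.dotProduct_mulVec, hπvm, zero_dotProduct]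
      have hconst : ∀ w ∈ F, ψ w = ψ v := fun w hw =>
        ker_const_on_source tail head mV mA hmV hmA F hF ψ hψker hw hv
      have hdot2 : dotProduct π ψ = (∑ w ∈ F, π w) * ψ v := by
        show ∑ w, π w * ψ w = _
        rw [← Finset.sum_subset (Finset.subset_univ F)
          (fun w _ hw => by rw [hπsupp w hw, zero_mul]), Finset.sum_mul]
        exact Finset.sum_congr rfl fun w hw => by rw [hconst w hw]
      rw [hdot] at hdot2
      rcases mul_eq_zero.mp hdot2.symm with h | h
      · exact absurd h hπsum
      · exact h
    have hψ0 : ψ = 0 := ker_eq_zero_of_vanish tail head mV mA hmV hmA ψ hψker hvanish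
    rw [happly]
    exact hψ0
  -- kernels of powers
  have hkerpow : ∀ n : ℕ, LinearMap.ker (f ^ (n + 1)) = LinearMap.ker f := by
    intro n
    induction n with
    | zero => rw [pow_one]
    | succ n ih =>
        apply le_antisymm
        · intro φ hφ
          simp only [LinearMap.mem_ker] at hφ ⊢
          rw [pow_succ, Module.End.mul_apply] at hφ
          have h1 : f φ ∈ LinearMap.ker (f ^ (n + 1)) := hφ
          rw [ih, LinearMap.mem_ker] at h1
          exact hker2 φ h1
        · intro φ hφ
          simp only [LinearMap.mem_ker] at hφ ⊢
          rw [pow_succ, Module.End.mul_apply, hφ, map_zero]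
  -- the maximal generalized 0-eigenspace is the kernel
  have hmge : f.maxGenEigenspace 0 = LinearMap.ker f := by
    rw [← Module.End.iSup_genEigenspace_eq]
    have hk : ∀ k : ℕ, (f.genEigenspace 0) (k : ℕ∞) = LinearMap.ker (f ^ k) := by
      intro k
      rw [Module.End.genEigenspace_nat]
      simp
    apply le_antisymm
    · apply iSup_le
      intro k
      rw [hk k]
      cases k with
      | zero =>
          intro x hx
          simp only [pow_zero, LinearMap.mem_ker, Module.End.one_apply] at hx
          simp [hx]
      | succ n => rw [hkerpow n]
    · have h1 : LinearMap.ker f = (f.genEigenspace 0) ((1 : ℕ) : ℕ∞) := by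
        rw [hk 1, pow_one]
      rw [h1]
      exact le_iSup (fun k : ℕ => (f.genEigenspace 0) (k : ℕ∞)) 1
  -- dimension count
  set Srcs := {F : Finset V | IsSourceF tail head F} with hSrcsdef
  haveI : Fintype ↥Srcs := (Set.toFinite Srcs).fintype
  have hup : Module.finrank ℂ (LinearMap.ker f) ≤ Fintype.card ↥Srcs := by
    have hpick : ∀ F : ↥Srcs, ∃ v, v ∈ (F.1 : Finset V) := fun F => F.2.1
    choose pick hpickmem using hpick
    set Θ : LinearMap.ker f →ₗ[ℂ] (↥Srcs → ℂ) :=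
      { toFun := fun φ F => (φ : V → ℂ) (pick F),
        map_add' := fun _ _ => rfl,
        map_smul' := fun _ _ => rfl } with hΘ
    have hinj : LinearMap.ker Θ = ⊥ := by
      apply LinearMap.ker_eq_bot'.mpr
      intro φ hφ0
      have hker' : M.mulVec (φ : V → ℂ) = 0 := by
        rw [← happly]
        exact LinearMap.mem_ker.mp φ.2
      have hzero : ∀ F : Finset V, IsSourceF tail head F → ∀ v ∈ F, (φ : V → ℂ) v = 0 := by
        intro F hF v hv
        have hFs : F ∈ Srcs := hF
        have h1 : (φ : V → ℂ) (pick ⟨F, hFs⟩) = 0 := congrFun hφ0 ⟨F, hFs⟩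
        rw [ker_const_on_source tail head mV mA hmV hmA F hF _ hker' hv (hpickmem ⟨F, hFs⟩)]
        exact h1
      exact Subtype.ext (ker_eq_zero_of_vanish tail head mV mA hmV hmA _ hker' hzero)
    calc Module.finrank ℂ (LinearMap.ker f) ≤ Module.finrank ℂ (↥Srcs → ℂ) :=
          LinearMap.finrank_le_finrank_of_injective (LinearMap.ker_eq_bot.mp hinj)
      _ = Fintype.card ↥Srcs := Module.finrank_pi ℂ
  have hlow : Fintype.card ↥Srcs ≤ Module.finrank ℂ (LinearMap.ker (Mᵀ.mulVecLin)) := by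
    choose π hπsupp hπvm hπsum using
      fun F : ↥Srcs => exists_left_vec tail head mV mA hmV hmA F.1 F.2
    set Ψ : (↥Srcs → ℂ) →ₗ[ℂ] (V → ℂ) :=
      { toFun := fun c => ∑ F : ↥Srcs, c F • π F,
        map_add' := by intro x y; simp [add_smul, Finset.sum_add_distrib],
        map_smul' := by intro c x; simp [smul_smul, Finset.smul_sum] } with hΨ
    have hrange : ∀ c, Ψ c ∈ LinearMap.ker (Mᵀ.mulVecLin) := by
      intro c
      rw [LinearMap.mem_ker]
      show Mᵀ.mulVecLin (∑ F : ↥Srcs, c F • π F) = 0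
      rw [map_sum]
      refine Finset.sum_eq_zero fun F _ => ?_
      rw [_root_.map_smul]
      have h0 : Mᵀ.mulVecLin (π F) = 0 := by
        rw [Matrix.mulVecLin_apply, Matrix.mulVec_transpose, hπvm F]
      rw [h0, smul_zero]
    set Ψ' : (↥Srcs → ℂ) →ₗ[ℂ] LinearMap.ker (Mᵀ.mulVecLin) :=
      Ψ.codRestrict _ hrange with hΨ'
    have hinj : LinearMap.ker Ψ' = ⊥ := by
      apply LinearMap.ker_eq_bot'.mpr
      intro c hc
      have hc0 : Ψ c = 0 := congrArg Subtype.val hc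
      funext F₀
      have h1 : ∑ v ∈ (F₀.1 : Finset V), Ψ c v = 0 := by
        rw [hc0]
        simp
      have h2 : ∑ v ∈ (F₀.1 : Finset V), Ψ c v = c F₀ * ∑ v ∈ (F₀.1 : Finset V), π F₀ v := by
        have hexp : ∀ v, Ψ c v = ∑ F : ↥Srcs, c F * π F v := by
          intro v
          show (∑ F : ↥Srcs, c F • π F) v = _
          rw [Finset.sum_apply]
          exact Finset.sum_congr rfl fun F _ => rfl
        simp only [hexp]
        rw [Finset.sum_comm]
        rw [Finset.sum_eq_single F₀]
        · rw [← Finset.mul_sum]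
        · intro F _ hne
          apply Finset.sum_eq_zero
          intro v hv
          have hnotin : v ∉ (F.1 : Finset V) := by
            intro hin
            exact hne (Subtype.ext (source_eq_of_mem tail head F.2 F₀.2 hin hv))
          rw [hπsupp F v hnotin, mul_zero]
        · intro h
          exact absurd (Finset.mem_univ F₀) h
      rw [h1] at h2
      rcases mul_eq_zero.mp h2.symm with h | h
      · exact h
      · exact absurd h (hπsum F₀)
    calc Fintype.card ↥Srcs = Module.finrank ℂ (↥Srcs → ℂ) := (Module.finrank_pi ℂ).symm
      _ ≤ Module.finrank ℂ (LinearMap.ker (Mᵀ.mulVecLin)) :=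
          LinearMap.finrank_le_finrank_of_injective (LinearMap.ker_eq_bot.mp hinj)
  have htrans : Module.finrank ℂ (LinearMap.ker (Mᵀ.mulVecLin))
      = Module.finrank ℂ (LinearMap.ker f) := by
    have h1 := LinearMap.finrank_range_add_finrank_ker (Mᵀ.mulVecLin)
    have h2 := LinearMap.finrank_range_add_finrank_ker (M.mulVecLin)
    have h3 : Module.finrank ℂ (LinearMap.range (Mᵀ.mulVecLin))
        = Module.finrank ℂ (LinearMap.range (M.mulVecLin)) := Matrix.rank_transpose M
    rw [hfdef]
    omega
  have hcard : Module.finrank ℂ (LinearMap.ker f) = Fintype.card ↥Srcs :=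
    le_antisymm hup (hlow.trans (le_of_eq htrans))
  -- charpoly link and conclusion
  have hcp : LinearMap.charpoly f = M.charpoly := by
    have hmat : LinearMap.toMatrix (Pi.basisFun ℂ V) (Pi.basisFun ℂ V) f = M := by
      rw [LinearMap.toMatrix_eq_toMatrix', hfdef, ← Matrix.toLin'_apply',
        LinearMap.toMatrix'_toLin']
    rw [← hmat, LinearMap.charpoly_toMatrix]
  rw [← hcp, Polynomial.rootMultiplicity_eq_natTrailingDegree',
    ← LinearMap.finrank_maxGenEigenspace_zero_eq, hmge, hcard]
  rw [← Nat.card_coe_set_eq, Nat.card_eq_fintype_card]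

lemma ncard_one_iff {P : Finset V → Prop} :
    {F : Finset V | P F}.ncard = 1 ↔ ∃! F, P F := by
  rw [Set.ncard_eq_one]
  constructor
  · rintro ⟨a, ha⟩
    have h := Set.eq_singleton_iff_unique_mem.mp ha
    exact ⟨a, h.1, fun y hy => h.2 y hy⟩
  · rintro ⟨a, ha, hu⟩
    exact ⟨a, Set.eq_singleton_iff_unique_mem.mpr ⟨ha, hu⟩⟩

end Aux


/-- The algebraic multiplicity of the eigenvalue `0` of the in Laplacian `L⁺` equals the
number of sources of `G`, and that of the out Laplacian `L⁻` equals the number of sinks;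
in particular `0` is a simple eigenvalue of `L^±` iff `G` has exactly one source/sink. -/
theorem stmt_15 [Fintype V] [Fintype A] [DecidableEq V]
    (tail head : A → V) (mV : V → ℝ) (mA : A → ℝ)
    (hmV : ∀ v, 0 < mV v) (hmA : ∀ a, 0 < mA a) :
    ((Mplus tail head mV mA).charpoly.rootMultiplicity 0 =
        {F : Finset V | IsSourceF tail head F}.ncard) ∧
    ((Mminus tail head mV mA).charpoly.rootMultiplicity 0 =
        {S : Finset V | IsSinkF tail head S}.ncard) ∧
    ((Mplus tail head mV mA).charpoly.rootMultiplicity 0 = 1 ↔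
        ∃! F : Finset V, IsSourceF tail head F) ∧
    ((Mminus tail head mV mA).charpoly.rootMultiplicity 0 = 1 ↔
        ∃! S : Finset V, IsSinkF tail head S) := by
  have hminus : Mminus tail head mV mA = Mplus head tail mV mA := rfl
  have hsets : {S : Finset V | IsSinkF tail head S} = {S : Finset V | IsSourceF head tail S} := by
    ext S
    exact sink_iff_source tail head S
  have h1 := mult_eq_card_sources tail head mV mA hmV hmA
  have h2 : (Mminus tail head mV mA).charpoly.rootMultiplicity 0
      = {S : Finset V | IsSinkF tail head S}.ncard := by
    rw [hminus, mult_eq_card_sources head tail mV mA hmV hmA, hsets]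
  refine ⟨h1, h2, ?_, ?_⟩
  · rw [h1]
    exact ncard_one_iff
  · rw [h2]
    exact ncard_one_iff
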